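/- Let m ≥ 2 be an integer, let W₁ < W₂ < ⋯ < W_m be nonnegative reals, and let p₁, …, p_m be strictly positive reals with ∑_{i=1}^m p_i = 1. For 1 ≤ i ≤ m−1 set q_i = (1 − ∑_{j=1}^{i} p_j)/(1 − ∑_{j=1}^{i−1} p_j), and let Y₁, …, Y_{m−1} be independent random variables where Y_i takes the value W_m with probability q_i and the value W_i with probability 1 − q_i. Then the random variable M = min{Y₁, …, Y_{m−1}} satisfies Pr(M = W_i) = p_i for every 1 ≤ i ≤ m. -/

import Mathlib

open MeasureTheory ProbabilityTheory Finset

/-- **Correctness of the RW → BCW transformation.** Let `W 1 < ⋯ < W m` be nonnegative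
reals and `p 1, …, p m` strictly positive reals summing to `1`. For `1 ≤ i ≤ m-1` let
`q i = (1 - ∑_{j=1}^{i} p j)/(1 - ∑_{j=1}^{i-1} p j)` and let `Y 1, …, Y (m-1)` be
independent random variables, `Y i` taking the value `W m` with probability `q i` and the
value `W i` with probability `1 - q i`. Then the minimum `M = min_i Y i` satisfies
`Pr(M = W i) = p i` for every `1 ≤ i ≤ m`. -/
theorem rw_to_bcw_minimum {Ω : Type*} [MeasurableSpace Ω]
    (P : Measure Ω) [IsProbabilityMeasure P]
    (m : ℕ) (hm : 2 ≤ m) (W p : ℕ → ℝ)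
    (hW0 : ∀ i, 1 ≤ i → i ≤ m → 0 ≤ W i)
    (hWmono : ∀ i j, 1 ≤ i → i < j → j ≤ m → W i < W j)
    (hp : ∀ i, 1 ≤ i → i ≤ m → 0 < p i)
    (hpsum : ∑ j ∈ Icc 1 m, p j = 1)
    (Y : Fin (m - 1) → Ω → ℝ)
    (hmeas : ∀ i, Measurable (Y i))
    (hindep : iIndepFun Y P)
    (hheavy : ∀ i : Fin (m - 1), P {ω | Y i ω = W m}
      = ENNReal.ofReal ((1 - ∑ j ∈ Icc 1 ((i : ℕ) + 1), p j)
          / (1 - ∑ j ∈ Icc 1 (i : ℕ), p j)))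
    (hlight : ∀ i : Fin (m - 1), P {ω | Y i ω = W ((i : ℕ) + 1)}
      = ENNReal.ofReal (1 - (1 - ∑ j ∈ Icc 1 ((i : ℕ) + 1), p j)
          / (1 - ∑ j ∈ Icc 1 (i : ℕ), p j))) :
    ∀ i, 1 ≤ i → i ≤ m →
      P {ω | (⨅ j : Fin (m - 1), Y j ω) = W i} = ENNReal.ofReal (p i) := by
  have hn1 : 1 ≤ m - 1 := by omega
  haveI : Nonempty (Fin (m - 1)) := ⟨⟨0, by omega⟩⟩
  set S : ℕ → ℝ := fun k => ∑ j ∈ Icc 1 k, p j with hSdef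
  -- basic facts about the partial sums
  have hS0 : S 0 = 0 := by simp [hSdef]
  have hSstep : ∀ k, S (k + 1) = S k + p (k + 1) := by
    intro k
    simpa [hSdef] using Finset.sum_Icc_succ_top (by omega : 1 ≤ k + 1) p
  have hSsplit : ∀ k, k ≤ m → S k + (∑ j ∈ Ioc k m, p j) = 1 := by
    intro k hk
    have h := Finset.sum_Ioc_consecutive p (Nat.zero_le k) hk
    have h1 : S k = ∑ j ∈ Ioc 0 k, p j := by
      simp [hSdef, ← Finset.Icc_add_one_left_eq_Ioc]
    have h2 : (1 : ℝ) = ∑ j ∈ Ioc 0 m, p j := by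
      rw [← hpsum]; simp [← Finset.Icc_add_one_left_eq_Ioc]
    rw [h1, h2]; exact h
  have hSpos : ∀ k, k < m → 0 < 1 - S k := by
    intro k hk
    have h := hSsplit k hk.le
    have hpos : 0 < ∑ j ∈ Ioc k m, p j := by
      apply Finset.sum_pos
      · intro j hj
        rw [Finset.mem_Ioc] at hj
        exact hp j (by omega) hj.2
      · exact ⟨m, by rw [Finset.mem_Ioc]; omega⟩
    linarith
  have hSle1 : ∀ k, k ≤ m → S k ≤ 1 := by
    intro k hk
    have h := hSsplit k hk
    have : 0 ≤ ∑ j ∈ Ioc k m, p j :=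
      Finset.sum_nonneg fun j hj => by
        rw [Finset.mem_Ioc] at hj; exact (hp j (by omega) hj.2).le
    linarith
  -- the biased-coin probabilities
  set qr : ℕ → ℝ := fun k => (1 - S (k + 1)) / (1 - S k) with hqrdef
  have hq_nonneg : ∀ k, k + 1 ≤ m → 0 ≤ qr k := by
    intro k hk
    apply div_nonneg
    · linarith [hSle1 (k + 1) hk]
    · linarith [hSpos k (by omega)]
  have hq_le1 : ∀ k, k + 1 ≤ m → qr k ≤ 1 := by
    intro k hk
    simp only [hqrdef]; rw [div_le_one (hSpos k (by omega))]
    have := hp (k + 1) (by omega) hk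
    have := hSstep k
    linarith
  -- telescoping product
  have tele : ∀ k, k ≤ m - 1 → ∏ j ∈ range k, qr j = 1 - S k := by
    intro k hk
    induction k with
    | zero => simp [hS0]
    | succ k ih =>
        rw [Finset.prod_range_succ, ih (by omega)]; simp only [hqrdef]
        have hne : (1 : ℝ) - S k ≠ 0 := ne_of_gt (hSpos k (by omega))
        field_simp
  have hWinj : ∀ a b, 1 ≤ a → a ≤ m → 1 ≤ b → b ≤ m → W a = W b → a = b := by
    intro a b ha1 ham hb1 hbm hab
    rcases lt_trichotomy a b with h | h | h
    · exact absurd hab (ne_of_lt (hWmono a b ha1 h hbm))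
    · exact h
    · exact absurd hab.symm (ne_of_lt (hWmono b a hb1 h ham))
  have hbdd : ∀ ω : Ω, BddBelow (Set.range fun j : Fin (m - 1) => Y j ω) := by
    intro ω; exact (Set.finite_range _).bddBelow
  -- the a.s. event where every Y j takes one of its two values
  set G : Set Ω :=
    ⋂ j : Fin (m - 1), ({ω | Y j ω = W m} ∪ {ω | Y j ω = W ((j : ℕ) + 1)}) with hGdef
  have hmeasH : ∀ j : Fin (m - 1), MeasurableSet {ω | Y j ω = W m} := by
    intro j
    exact (hmeas j) (measurableSet_singleton (W m))
  have hmeasL : ∀ j : Fin (m - 1), MeasurableSet {ω | Y j ω = W ((j : ℕ) + 1)} := by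
    intro j
    exact (hmeas j) (measurableSet_singleton (W ((j : ℕ) + 1)))
  have hjm : ∀ j : Fin (m - 1), (j : ℕ) + 1 < m := by
    intro j; have := j.2; omega
  have hGone : ∀ j : Fin (m - 1),
      P ({ω | Y j ω = W m} ∪ {ω | Y j ω = W ((j : ℕ) + 1)}) = 1 := by
    intro j
    have hdisj : Disjoint {ω | Y j ω = W m} {ω | Y j ω = W ((j : ℕ) + 1)} := by
      rw [Set.disjoint_left]
      intro ω h1 h2
      simp only [Set.mem_setOf_eq] at h1 h2
      have : W ((j : ℕ) + 1) < W m := hWmono _ _ (by omega) (hjm j) le_rfl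
      rw [h1] at h2; linarith
    rw [measure_union hdisj (hmeasL j), hheavy j, hlight j]
    rw [← ENNReal.ofReal_add (hq_nonneg (j : ℕ) (hjm j).le)
      (by linarith [hq_le1 (j : ℕ) (hjm j).le])]
    norm_num
    simp only [hqrdef, hSdef]; ring
  have hGc : P Gᶜ = 0 := by
    rw [hGdef, Set.compl_iInter]
    apply measure_iUnion_null
    intro j
    have hms : MeasurableSet ({ω | Y j ω = W m} ∪ {ω | Y j ω = W ((j : ℕ) + 1)}) :=
      (hmeasH j).union (hmeasL j)
    rw [measure_compl hms (measure_ne_top P _), hGone j, measure_univ]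
    simp
  -- main computation, per i
  intro i hi1 him
  -- the target sets
  set B : Fin (m - 1) → Set ℝ := fun j =>
    if (j : ℕ) + 1 < i then {W m} else if (j : ℕ) + 1 = i then {W i} else Set.univ
    with hBdef
  have hBmeas : ∀ j : Fin (m - 1), MeasurableSet (B j) := by
    intro j
    simp only [hBdef]
    split_ifs <;> first | exact measurableSet_singleton _ | exact MeasurableSet.univ
  set E : Set Ω := ⋂ j : Fin (m - 1), Y j ⁻¹' (B j) with hEdef
  set T : Set Ω := {ω | (⨅ j : Fin (m - 1), Y j ω) = W i} with hTdef
  -- set equality on G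
  have hTE : T ∩ G = E ∩ G := by
    ext ω
    simp only [Set.mem_inter_iff, and_congr_left_iff]
    intro hG
    rw [hGdef, Set.mem_iInter] at hG
    have hval : ∀ j : Fin (m - 1), Y j ω = W m ∨ Y j ω = W ((j : ℕ) + 1) := by
      intro j
      have := hG j
      simpa using this
    have hWiWm : W i ≤ W m := by
      rcases eq_or_lt_of_le him with h | h
      · rw [h]
      · exact (hWmono i m hi1 h le_rfl).le
    constructor
    · -- T → E
      intro hT
      rw [hTdef, Set.mem_setOf_eq] at hT
      have hlow : ∀ j : Fin (m - 1), W i ≤ Y j ω := by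
        intro j
        rw [← hT]
        exact ciInf_le (hbdd ω) j
      obtain ⟨j₀, hj₀⟩ := Finite.exists_min fun j : Fin (m - 1) => Y j ω
      have hmin : Y j₀ ω = W i := by
        refine le_antisymm ?_ (hlow j₀)
        rw [← hT]
        exact le_ciInf hj₀
      rw [hEdef, Set.mem_iInter]
      intro j
      rw [Set.mem_preimage]; simp only [hBdef]
      split_ifs with h1 h2
      · -- j+1 < i : heavy
        rcases hval j with h | h
        · simp [h]
        · exfalso
          have : W ((j : ℕ) + 1) < W i := hWmono _ _ (by omega) h1 him
          have := hlow j
          rw [h] at this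
          linarith
      · -- j+1 = i : light
        have hilt : i < m := by have := hjm j; omega
        have hj₀v : Y j₀ ω = W ((j₀ : ℕ) + 1) := by
          rcases hval j₀ with h | h
          · exfalso
            rw [h] at hmin
            have := hWmono i m hi1 hilt le_rfl
            linarith
          · exact h
        have : ((j₀ : ℕ) + 1) = i := by
          apply hWinj _ _ (by omega) (hjm j₀).le hi1 him
          rw [← hj₀v, hmin]
        have hjj : j₀ = j := by
          apply Fin.ext; omega
        rw [← hjj, hj₀v, this]
        rfl
      · trivial
    · -- E → T
      intro hE
      rw [hEdef, Set.mem_iInter] at hE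
      have hEv : ∀ j : Fin (m - 1), Y j ω ∈ B j := fun j => hE j
      have hlow : ∀ j : Fin (m - 1), W i ≤ Y j ω := by
        intro j
        have := hEv j
        simp only [hBdef] at this
        split_ifs at this with h1 h2
        · rw [Set.mem_singleton_iff] at this; rw [this]; exact hWiWm
        · rw [Set.mem_singleton_iff] at this; rw [this]
        · rcases hval j with h | h
          · rw [h]; exact hWiWm
          · rw [h]
            exact (hWmono i ((j : ℕ) + 1) hi1 (by omega) (hjm j).le).le
      have hatt : ∃ j : Fin (m - 1), Y j ω = W i := by
        rcases eq_or_lt_of_le him with h | h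
        · -- i = m : index 0 is heavy since 0 + 1 < i
          refine ⟨⟨0, by omega⟩, ?_⟩
          have := hEv ⟨0, by omega⟩
          simp only [hBdef] at this
          rw [if_pos (by simpa using (by omega : 0 + 1 < i))] at this
          rw [Set.mem_singleton_iff] at this
          rw [this, h]
        · refine ⟨⟨i - 1, by omega⟩, ?_⟩
          have := hEv ⟨i - 1, by omega⟩
          simp only [hBdef] at this
          rw [if_neg (by omega), if_pos (by omega)] at this
          rw [Set.mem_singleton_iff] at this
          exact this
      obtain ⟨j₁, hj₁⟩ := hatt
      rw [hTdef, Set.mem_setOf_eq]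
      refine le_antisymm ?_ (le_ciInf hlow)
      calc (⨅ j : Fin (m - 1), Y j ω) ≤ Y j₁ ω := ciInf_le (hbdd ω) j₁
        _ = W i := hj₁
  -- P T = P E via the a.s. event G
  have habs : ∀ T' E' : Set Ω, T' ∩ G = E' ∩ G → P T' ≤ P E' := by
    intro T' E' h
    calc P T' = P ((T' ∩ G) ∪ (T' ∩ Gᶜ)) := by
          rw [← Set.inter_union_distrib_left, Set.union_compl_self, Set.inter_univ]
      _ ≤ P (T' ∩ G) + P (T' ∩ Gᶜ) := measure_union_le _ _
      _ ≤ P (E' ∩ G) + P Gᶜ := by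
          rw [h]
          exact add_le_add le_rfl (measure_mono Set.inter_subset_right)
      _ = P (E' ∩ G) := by rw [hGc, add_zero]
      _ ≤ P E' := measure_mono Set.inter_subset_left
  have hPTE : P T = P E := le_antisymm (habs T E hTE) (habs E T hTE.symm)
  -- compute P E by independence
  have hPE : P E = ∏ j : Fin (m - 1), P (Y j ⁻¹' B j) := by
    have h := hindep.measure_inter_preimage_eq_mul Finset.univ
      (sets := B) (fun j _ => hBmeas j)
    rw [hEdef]
    rw [← h]
    congr 1
    ext ω
    simp
  -- value of each factor
  set F : ℕ → ℝ := fun k =>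
    if k + 1 < i then qr k else if k + 1 = i then 1 - qr k else 1 with hFdef
  have hF_nonneg : ∀ k, k < m - 1 → 0 ≤ F k := by
    intro k hk
    simp only [hFdef]
    split_ifs with h1 h2
    · exact hq_nonneg k (by omega)
    · linarith [hq_le1 k (by omega)]
    · norm_num
  have hfac : ∀ j : Fin (m - 1), P (Y j ⁻¹' B j) = ENNReal.ofReal (F (j : ℕ)) := by
    intro j
    simp only [hBdef, hFdef]
    split_ifs with h1 h2
    · have : Y j ⁻¹' {W m} = {ω | Y j ω = W m} := by ext ω; simp
      rw [this, hheavy j]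
    · have : Y j ⁻¹' {W i} = {ω | Y j ω = W ((j : ℕ) + 1)} := by
        ext ω; simp [h2]
      rw [this, hlight j]
    · simp
  -- the real product
  have hprod : ∏ k ∈ range (m - 1), F k = p i := by
    rcases eq_or_lt_of_le him with h | h
    · -- i = m
      have heq : ∀ k ∈ range (m - 1), F k = qr k := by
        intro k hk
        rw [Finset.mem_range] at hk
        simp only [hFdef]
        rw [if_pos (by omega)]
      rw [Finset.prod_congr rfl heq, tele (m - 1) le_rfl]
      have hms : S m = S (m - 1) + p m := by
        have := hSstep (m - 1)
        have hmm : m - 1 + 1 = m := by omega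
        rw [hmm] at this
        exact this
      have hSm : S m = 1 := hpsum
      rw [h]
      linarith
    · -- i < m
      have hsub : ∏ k ∈ range (m - 1), F k = ∏ k ∈ range i, F k := by
        refine (Finset.prod_subset (Finset.range_subset_range.2 (by omega)) ?_).symm
        intro k hk hk'
        rw [Finset.mem_range] at hk
        rw [Finset.mem_range] at hk'
        simp only [hFdef]
        rw [if_neg (by omega), if_neg (by omega)]
      have hi : i = (i - 1) + 1 := by omega
      have hstep : ∏ k ∈ range i, F k = (∏ k ∈ range (i - 1), F k) * F (i - 1) := by
        conv_lhs => rw [hi]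
        rw [Finset.prod_range_succ]
      have hinit : ∏ k ∈ range (i - 1), F k = 1 - S (i - 1) := by
        have heq : ∀ k ∈ range (i - 1), F k = qr k := by
          intro k hk
          rw [Finset.mem_range] at hk
          simp only [hFdef]
          rw [if_pos (by omega)]
        rw [Finset.prod_congr rfl heq, tele (i - 1) (by omega)]
      have hlast : F (i - 1) = 1 - qr (i - 1) := by
        simp only [hFdef]
        rw [if_neg (by omega), if_pos (by omega)]
      rw [hsub, hstep, hinit, hlast]; simp only [hqrdef]
      have hne : (1 : ℝ) - S (i - 1) ≠ 0 := ne_of_gt (hSpos (i - 1) (by omega))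
      have hstp : S ((i - 1) + 1) = S (i - 1) + p ((i - 1) + 1) := hSstep (i - 1)
      rw [← hi] at hstp
      field_simp
      rw [← hi]
      linarith
  -- put it together
  have hPEval : P E = ENNReal.ofReal (p i) := by
    rw [hPE]
    have : ∀ j : Fin (m - 1), P (Y j ⁻¹' B j) = ENNReal.ofReal (F (j : ℕ)) := hfac
    rw [Finset.prod_congr rfl fun j _ => this j]
    rw [Fin.prod_univ_eq_prod_range (fun k => ENNReal.ofReal (F k)) (m - 1)]
    rw [← ENNReal.ofReal_prod_of_nonneg fun k hk =>
      hF_nonneg k (Finset.mem_range.mp hk)]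
    rw [hprod]
  rw [hPTE, hPEval]
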